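/- For all real numbers a, c with a ≥ 1 and c > a, setting Q(a,c) = (cosh(a)·cosh(c) + 1)/(sinh(a)·sinh(c)), b = arcosh(Q(a,c)), and d = arcosh(sinh(b)·sinh(c)), one has the explicit lower bound d ≥ log(√2/4) + c − a. -/

import Mathlib

/-- The inverse hyperbolic cosine, for `x ≥ 1`. -/
noncomputable def arcosh (x : ℝ) : ℝ := Real.log (x + Real.sqrt (x ^ 2 - 1))

lemma sinh_arcosh' {x : ℝ} (hx : 1 ≤ x) :
    Real.sinh (arcosh x) = Real.sqrt (x ^ 2 - 1) := by
  have hs : Real.sqrt (x ^ 2 - 1) ^ 2 = x ^ 2 - 1 := Real.sq_sqrt (by nlinarith)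
  have hpos : 0 < x + Real.sqrt (x ^ 2 - 1) := by
    nlinarith [Real.sqrt_nonneg (x ^ 2 - 1)]
  have he : Real.exp (arcosh x) = x + Real.sqrt (x ^ 2 - 1) := by
    rw [arcosh, Real.exp_log hpos]
  rw [Real.sinh_eq, Real.exp_neg, he]
  field_simp
  nlinarith [hs]

lemma arcosh_ge_log {x : ℝ} (hx : 1 ≤ x) : Real.log x ≤ arcosh x := by
  apply Real.log_le_log (by linarith)
  nlinarith [Real.sqrt_nonneg (x ^ 2 - 1)]

set_option maxHeartbeats 1000000 in
/-- Explicit lower bound in the proof of the pentagon lemma (Lemma 8.1):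
`d ≥ log (√2 / 4) + c - a`. -/
theorem pentagon_lemma_explicit_lower_bound (a c : ℝ) (ha : 1 ≤ a) (hc : a < c) :
    let Q := (Real.cosh a * Real.cosh c + 1) / (Real.sinh a * Real.sinh c)
    let b := arcosh Q
    let d := arcosh (Real.sinh b * Real.sinh c)
    Real.log (Real.sqrt 2 / 4) + c - a ≤ d := by
  intro Q b d
  have ha0 : (0:ℝ) < a := by linarith
  have hsa : 0 < Real.sinh a := Real.sinh_pos_iff.2 ha0
  have hsc : 0 < Real.sinh c := Real.sinh_pos_iff.2 (by linarith)
  have hcm : Real.cosh (c - a) = Real.cosh c * Real.cosh a - Real.sinh c * Real.sinh a :=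
    Real.cosh_sub c a
  have hcp : Real.cosh (c + a) = Real.cosh c * Real.cosh a + Real.sinh c * Real.sinh a :=
    Real.cosh_add c a
  have h1cm : 1 ≤ Real.cosh (c - a) := Real.one_le_cosh _
  have hQ1 : 1 ≤ Q := by
    rw [le_div_iff₀ (by positivity)]
    nlinarith
  have hsb : Real.sinh b = Real.sqrt (Q ^ 2 - 1) := sinh_arcosh' hQ1
  set S := Real.sinh b * Real.sinh c with hSdef
  have hS0 : 0 ≤ S := by
    rw [hSdef, hsb]; positivity
  -- lower bounds coming from exp
  have hexpm : Real.exp (c - a) ≤ 2 * Real.cosh (c - a) := by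
    rw [Real.cosh_eq]
    have := Real.exp_pos (-(c - a))
    linarith
  have hexpp : Real.exp (c + a) ≤ 2 * Real.cosh (c + a) := by
    rw [Real.cosh_eq]
    have := Real.exp_pos (-(c + a))
    linarith
  have hsinha : 2 * Real.sinh a ≤ Real.exp a := by
    rw [Real.sinh_eq]
    have := Real.exp_pos (-a)
    linarith
  have hsq : S ^ 2 = (Q ^ 2 - 1) * Real.sinh c ^ 2 := by
    rw [hSdef, hsb, mul_pow, Real.sq_sqrt (by nlinarith)]
  have hQsq : (Q ^ 2 - 1) * (Real.sinh a * Real.sinh c) ^ 2 =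
      (Real.cosh a * Real.cosh c + 1) ^ 2 - (Real.sinh a * Real.sinh c) ^ 2 := by
    have h : Q * (Real.sinh a * Real.sinh c) = Real.cosh a * Real.cosh c + 1 := by
      exact div_mul_cancel₀ _ (mul_pos hsa hsc).ne'
    linear_combination (Q * (Real.sinh a * Real.sinh c)
      + (Real.cosh a * Real.cosh c + 1)) * h
  -- S^2 * sinh a ^2 = (X - Y)(X + Y) = (cosh(c-a)+1)(cosh(c+a)+1)
  have hkey : S ^ 2 * Real.sinh a ^ 2 =
      (Real.cosh (c - a) + 1) * (Real.cosh (c + a) + 1) := by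
    rw [hsq, hcm, hcp]
    linear_combination hQsq
  have hT : 0 < Real.exp (c - a) := Real.exp_pos _
  have hbound : Real.exp (c - a) ^ 2 ≤ S ^ 2 := by
    have hea : 0 < Real.exp a := Real.exp_pos a
    have hA : Real.exp (c - a) ≤ 2 * (Real.cosh (c - a) + 1) := by linarith
    have hB : Real.exp (c + a) ≤ 2 * (Real.cosh (c + a) + 1) := by linarith
    have h1 : Real.exp (c - a) * Real.exp (c + a) ≤
        4 * (S ^ 2 * Real.sinh a ^ 2) := by
      rw [hkey]
      nlinarith [Real.exp_pos (c + a), Real.one_le_cosh (c + a)]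
    have h3 : 4 * Real.sinh a ^ 2 ≤ Real.exp a ^ 2 := by nlinarith
    have hexpca : Real.exp (c - a) * Real.exp a = Real.exp c := by
      rw [← Real.exp_add]; ring_nf
    have e2 : Real.exp (c - a) * Real.exp (c + a) = Real.exp c * Real.exp c := by
      rw [← Real.exp_add, ← Real.exp_add]; ring_nf
    have hS2nn : 0 ≤ S ^ 2 := sq_nonneg S
    have h4 : Real.exp (c - a) ^ 2 * Real.exp a ^ 2 ≤ S ^ 2 * Real.exp a ^ 2 := by
      calc Real.exp (c - a) ^ 2 * Real.exp a ^ 2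
          = (Real.exp (c - a) * Real.exp a) ^ 2 := by ring
        _ = Real.exp c * Real.exp c := by rw [hexpca]; ring
        _ = Real.exp (c - a) * Real.exp (c + a) := e2.symm
        _ ≤ 4 * (S ^ 2 * Real.sinh a ^ 2) := h1
        _ = S ^ 2 * (4 * Real.sinh a ^ 2) := by ring
        _ ≤ S ^ 2 * Real.exp a ^ 2 := by
            exact mul_le_mul_of_nonneg_left h3 hS2nn
    exact le_of_mul_le_mul_right h4 (by positivity)
  have hSge : Real.exp (c - a) ≤ S := by nlinarith
  have hS1 : 1 ≤ S := le_trans (Real.one_le_exp (by linarith)) hSge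
  have hd : Real.log S ≤ d := arcosh_ge_log hS1
  have hlogS : c - a ≤ Real.log S := by
    calc c - a = Real.log (Real.exp (c - a)) := (Real.log_exp _).symm
    _ ≤ Real.log S := Real.log_le_log hT hSge
  have hlog24 : Real.log (Real.sqrt 2 / 4) ≤ 0 := by
    apply Real.log_nonpos
    · positivity
    · nlinarith [Real.sq_sqrt (by norm_num : (0:ℝ) ≤ 2), Real.sqrt_nonneg 2]
  linarith
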